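/- A finite p-group G has at most two small derived quotients; that is, there are at most two values of d ≥ 0 for which G^{(d+1)} ≠ 1 and |G^{(d)}/G^{(d+1)}| = p^{2^d+1}. -/

import Mathlib

/-- A derived quotient `G^(d)/G^(d+1)` is small if `G^(d+1) ≠ 1` and it has order `p^(2^d+1)`. -/
def IsSmallDerivedQuotient (p : ℕ) (G : Type*) [Group G] (d : ℕ) : Prop :=
  derivedSeries G (d + 1) ≠ ⊥ ∧
    (derivedSeries G (d + 1)).relIndex (derivedSeries G d) = p ^ (2 ^ d + 1)

namespace MannProof


open Subgroup
open scoped commutatorElement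

variable {G : Type*} [Group G]

/-- Iterated commutator with the whole group: `ncc N i = [N,G,G,...,G]` (i times). -/
def ncc (N : Subgroup G) : ℕ → Subgroup G
  | 0 => N
  | (i + 1) => ⁅ncc N i, (⊤ : Subgroup G)⁆

@[simp] lemma ncc_zero (N : Subgroup G) : ncc N 0 = N := rfl

@[simp] lemma ncc_succ (N : Subgroup G) (i : ℕ) : ncc N (i + 1) = ⁅ncc N i, (⊤ : Subgroup G)⁆ := rfl

instance ncc_normal (N : Subgroup G) [hN : N.Normal] (i : ℕ) : (ncc N i).Normal := by
  induction i with
  | zero => exact hN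
  | succ i ih => exact Subgroup.commutator_normal _ _

lemma ncc_mono {N M : Subgroup G} (h : N ≤ M) (i : ℕ) : ncc N i ≤ ncc M i := by
  induction i with
  | zero => exact h
  | succ i ih => exact Subgroup.commutator_mono ih le_rfl

lemma ncc_succ_le (N : Subgroup G) [N.Normal] (i : ℕ) : ncc N (i + 1) ≤ ncc N i :=
  Subgroup.commutator_le_left _ _

lemma ncc_le_self (N : Subgroup G) [N.Normal] (i : ℕ) : ncc N i ≤ N := by
  induction i with
  | zero => exact le_rfl
  | succ i ih => exact (ncc_succ_le N i).trans ih

lemma ncc_antitone (N : Subgroup G) [N.Normal] {i j : ℕ} (h : i ≤ j) : ncc N j ≤ ncc N i := by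
  induction j with
  | zero => simp_all
  | succ j ih =>
    rcases Nat.eq_or_lt_of_le h with h' | h'
    · rw [h']
    · exact (ncc_succ_le N j).trans (ih (Nat.lt_succ_iff.mp h'))

lemma ncc_add (N : Subgroup G) (i j : ℕ) : ncc (ncc N i) j = ncc N (i + j) := by
  induction j with
  | zero => rfl
  | succ j ih =>
    rw [ncc_succ, ih, ← ncc_succ]
    exact congrArg (ncc N) (by omega)

/-- Three subgroups lemma, with a normal subgroup as target. -/
lemma three_subgroups {A B C N : Subgroup G} [N.Normal]
    (h1 : ⁅⁅B, C⁆, A⁆ ≤ N) (h2 : ⁅⁅C, A⁆, B⁆ ≤ N) : ⁅⁅A, B⁆, C⁆ ≤ N := by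
  let f := QuotientGroup.mk' N
  have hker : f.ker = N := QuotientGroup.ker_mk' N
  have hmap : ∀ {X : Subgroup G}, X ≤ N → Subgroup.map f X = ⊥ := by
    intro X hX
    rw [Subgroup.map_eq_bot_iff, hker]
    exact hX
  have h1' : ⁅⁅Subgroup.map f B, Subgroup.map f C⁆, Subgroup.map f A⁆ = ⊥ := by
    rw [← Subgroup.map_commutator, ← Subgroup.map_commutator]
    exact hmap h1
  have h2' : ⁅⁅Subgroup.map f C, Subgroup.map f A⁆, Subgroup.map f B⁆ = ⊥ := by
    rw [← Subgroup.map_commutator, ← Subgroup.map_commutator]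
    exact hmap h2
  have h3' := Subgroup.commutator_commutator_eq_bot_of_rotate h1' h2'
  rw [← Subgroup.map_commutator, ← Subgroup.map_commutator, Subgroup.map_eq_bot_iff,
    hker] at h3'
  exact h3'

local notation "L" => Subgroup.lowerCentralSeries (⊤ : Subgroup G)

lemma lcs_succ (n : ℕ) : L (n + 1) = ⁅L n, (⊤ : Subgroup G)⁆ := by
  rw [Subgroup.lowerCentralSeries_succ, Subgroup.commutator_def]

lemma lcs_comm (i j : ℕ) : ⁅L i, L j⁆ ≤ L (i + j + 1) := by
  induction j generalizing i with
  | zero =>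
    rw [Subgroup.lowerCentralSeries_zero, ← lcs_succ]
  | succ j ih =>
    rw [lcs_succ j]
    have h1 : ⁅⁅(⊤ : Subgroup G), L i⁆, L j⁆ ≤ L (i + (j + 1) + 1) := by
      rw [Subgroup.commutator_comm (⊤ : Subgroup G) (L i), ← lcs_succ i]
      calc ⁅L (i+1), L j⁆ ≤ L ((i+1) + j + 1) := ih (i+1)
        _ = L (i + (j+1) + 1) := by ring_nf
    have h2 : ⁅⁅L i, L j⁆, (⊤ : Subgroup G)⁆ ≤ L (i + (j + 1) + 1) := by
      calc ⁅⁅L i, L j⁆, (⊤ : Subgroup G)⁆ ≤ ⁅L (i + j + 1), (⊤ : Subgroup G)⁆ :=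
            Subgroup.commutator_mono (ih i) le_rfl
        _ = L (i + j + 2) := (lcs_succ (i+j+1)).symm
        _ = L (i + (j+1) + 1) := by ring_nf
    -- goal : ⁅L i, ⁅L j, ⊤⁆⁆ ≤ L (i + (j+1) + 1), pattern A = L i, B = ⁅L j,⊤⁆? no:
    -- use three_subgroups with A := L i, B := L j, C := ⊤? target ⁅⁅A,B⁆,C⁆. Doesn't match.
    -- Instead: ⁅L i, ⁅L j, ⊤⁆⁆ = ⁅⁅L j, ⊤⁆, L i⁆ via comm; pattern A := L j, B := ⊤, C := L i.
    rw [Subgroup.commutator_comm]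
    exact three_subgroups h1 h2

lemma ds_le_lcs (n k : ℕ) (hk : k + 1 = 2 ^ n) : derivedSeries G n ≤ L k := by
  induction n generalizing k with
  | zero =>
    have : k = 0 := by omega
    simp [this]
  | succ n ih =>
    have h1 : 0 < 2 ^ n := Nat.pow_pos (by norm_num)
    set k' := 2 ^ n - 1 with hk'
    have hkk : k' + 1 = 2 ^ n := by omega
    have hk2 : k = k' + k' + 1 := by
      have : k + 1 = 2 * 2 ^ n := by rw [hk, pow_succ]; ring
      omega
    have hds : derivedSeries G (n + 1) = ⁅derivedSeries G n, derivedSeries G n⁆ :=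
      derivedSeries_succ G n
    rw [hds, hk2]
    exact (Subgroup.commutator_mono (ih k' hkk) (ih k' hkk)).trans (lcs_comm k' k')

lemma comm_lcs_le_ncc (N : Subgroup G) [N.Normal] (k : ℕ) : ⁅N, L k⁆ ≤ ncc N (k + 1) := by
  induction k generalizing N with
  | zero =>
    rw [Subgroup.lowerCentralSeries_zero]
    exact le_rfl
  | succ k ih =>
    rw [lcs_succ k]
    have h1 : ⁅⁅(⊤ : Subgroup G), N⁆, L k⁆ ≤ ncc N (k + 2) := by
      rw [Subgroup.commutator_comm (⊤ : Subgroup G) N]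
      have heq : ⁅N, (⊤ : Subgroup G)⁆ = ncc N 1 := rfl
      rw [heq]
      calc ⁅ncc N 1, L k⁆ ≤ ncc (ncc N 1) (k + 1) := ih (ncc N 1)
        _ = ncc N (k + 2) := by rw [ncc_add]; congr 1; omega
    have h2 : ⁅⁅N, L k⁆, (⊤ : Subgroup G)⁆ ≤ ncc N (k + 2) := by
      calc ⁅⁅N, L k⁆, (⊤ : Subgroup G)⁆ ≤ ⁅ncc N (k+1), (⊤ : Subgroup G)⁆ :=
            Subgroup.commutator_mono (ih N) le_rfl
        _ = ncc N (k + 2) := rfl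
    rw [Subgroup.commutator_comm]
    exact three_subgroups h1 h2

variable {p : ℕ}


lemma comm_top_lt [Finite G] (hp : p.Prime) (hG : IsPGroup p G) {N : Subgroup G} [N.Normal]
    (hN : N ≠ ⊥) : ⁅N, (⊤ : Subgroup G)⁆ < N := by
  haveI : Fact p.Prime := ⟨hp⟩
  refine lt_of_le_of_ne (Subgroup.commutator_le_left _ _) (fun heq => ?_)
  have hle : ∀ k, N ≤ L k := by
    intro k
    induction k with
    | zero => exact le_top
    | succ k ih =>
      calc N = ⁅N, ⊤⁆ := heq.symm
        _ ≤ ⁅L k, ⊤⁆ := Subgroup.commutator_mono ih le_rfl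
        _ = L (k+1) := (lcs_succ k).symm
  obtain ⟨n, hn⟩ := Subgroup.nilpotent_iff_lowerCentralSeries.mp hG.isNilpotent
  exact hN (le_bot_iff.mp (hn ▸ hle n))

lemma card_pos' [Finite G] (X : Subgroup G) : 0 < Nat.card X := Nat.card_pos

lemma card_step [Finite G] (hp : p.Prime) (hG : IsPGroup p G) {X Y : Subgroup G}
    (h : X < Y) : p * Nat.card X ≤ Nat.card Y := by
  haveI : Fact p.Prime := ⟨hp⟩
  obtain ⟨r, hr⟩ := Subgroup.card_dvd_of_le h.le
  have hr1 : r ≠ 1 := by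
    intro h1
    rw [h1, mul_one] at hr
    exact h.ne (Subgroup.eq_of_le_of_card_ge h.le hr.le)
  obtain ⟨n, hn⟩ := IsPGroup.iff_card.mp hG
  have hrd : r ∣ p ^ n := by
    have h1 : r ∣ Nat.card Y := Dvd.intro_left _ hr.symm
    rw [← hn]
    exact h1.trans (Subgroup.card_subgroup_dvd_card Y)
  obtain ⟨j, hj, hje⟩ := (Nat.dvd_prime_pow hp).mp hrd
  have hj0 : j ≠ 0 := by rintro rfl; simp [hje] at hr1
  have hpr : p ≤ r := by
    rw [hje]
    calc p = p ^ 1 := (pow_one p).symm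
      _ ≤ p ^ j := Nat.pow_le_pow_right hp.pos (Nat.one_le_iff_ne_zero.mpr hj0)
  calc p * Nat.card X ≤ r * Nat.card X := Nat.mul_le_mul_right _ hpr
    _ = Nat.card Y := by rw [hr, mul_comm]

lemma ncc_chain_card [Finite G] (hp : p.Prime) (hG : IsPGroup p G) (A : Subgroup G) [A.Normal]
    (t : ℕ) (h : ncc A t ≠ ⊥) : p ^ t * Nat.card (ncc A t) ≤ Nat.card A := by
  induction t with
  | zero => simp [ncc]
  | succ t ih =>
    have hAt : ncc A t ≠ ⊥ := by
      intro hb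
      apply h
      have := ncc_succ_le A t
      rw [hb] at this
      exact le_bot_iff.mp this
    have hlt : ncc A (t+1) < ncc A t := comm_top_lt hp hG hAt
    calc p ^ (t+1) * Nat.card (ncc A (t+1)) = p ^ t * (p * Nat.card (ncc A (t+1))) := by ring
      _ ≤ p ^ t * Nat.card (ncc A t) := Nat.mul_le_mul_left _ (card_step hp hG hlt)
      _ ≤ Nat.card A := ih hAt

lemma card_of_le [Finite G] {X Y : Subgroup G} (h : X ≤ Y) :
    Nat.card Y = X.relIndex Y * Nat.card X := by
  have h1 : Nat.card (X.subgroupOf Y) * (X.subgroupOf Y).index = Nat.card Y :=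
    Subgroup.card_mul_index _
  have h2 : Nat.card (X.subgroupOf Y) = Nat.card X :=
    Nat.card_congr (Subgroup.subgroupOfEquivOfLe h).toEquiv
  rw [← h1, h2, mul_comm]
  rfl



lemma commute_of_mem_closure {S : Set G} (hS : ∀ s ∈ S, ∀ t ∈ S, Commute s t)
    {x y : G} (hx : x ∈ closure S) (hy : y ∈ closure S) : Commute x y := by
  have step1 : ∀ s ∈ S, ∀ z ∈ closure S, Commute s z := by
    intro s hs z hz
    induction hz using closure_induction with
    | mem t ht => exact hS s hs t ht
    | one => exact Commute.one_right s
    | mul a b ha hb iha ihb => exact Commute.mul_right iha ihb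
    | inv a ha iha => exact Commute.inv_right iha
  induction hx using closure_induction with
  | mem t ht => exact step1 t ht y hy
  | one => exact Commute.one_left y
  | mul a b ha hb iha ihb => exact Commute.mul_left iha ihb
  | inv a ha iha => exact Commute.inv_left iha

lemma key_comm {X Z M : Subgroup G} [Z.Normal] [M.Normal] {u v : G}
    (hu : u ∈ X) (hv : v ∈ X) (hZX : Z ≤ X)
    (hX : X ≤ closure {u, v} ⊔ Z)
    (hXZ : ⁅X, Z⁆ ≤ M) (huv : ⁅u, v⁆ ∈ M) : ⁅X, X⁆ ≤ M := by
  rw [Subgroup.commutator_le]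
  intro x hx y hy
  set q := QuotientGroup.mk' M with hq
  rw [← QuotientGroup.eq_one_iff (⁅x, y⁆ : G) ]
  have hmapc : ((⁅x, y⁆ : G) : G ⧸ M) = ⁅(x : G ⧸ M), (y : G ⧸ M)⁆ := by
    simp [commutatorElement_def]
  rw [hmapc]
  have hcl : closure ({u, v} : Set G) ≤ X := by
    rw [Subgroup.closure_le]
    intro a ha
    rcases ha with rfl | ha
    · exact hu
    · rw [Set.mem_singleton_iff] at ha; subst ha; exact hv
  -- commuting with Z-parts
  have cz : ∀ a ∈ X, ∀ z ∈ Z, Commute (a : G ⧸ M) (z : G ⧸ M) := by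
    intro a ha z hz
    rw [Commute, SemiconjBy]
    have h1 : ((⁅a, z⁆ : G) : G ⧸ M) = 1 :=
      (QuotientGroup.eq_one_iff _).mpr (hXZ (Subgroup.commutator_mem_commutator ha hz))
    have h2 : ((⁅a, z⁆ : G) : G ⧸ M) = ⁅(a : G ⧸ M), (z : G ⧸ M)⁆ := by
      simp [commutatorElement_def]
    rw [h2] at h1
    have := commutatorElement_eq_one_iff_mul_comm.mp h1
    exact this
  -- commuting of closure-parts
  have cw : ∀ w ∈ closure ({u, v} : Set G), ∀ w' ∈ closure ({u, v} : Set G),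
      Commute (w : G ⧸ M) (w' : G ⧸ M) := by
    have hcomm_uv : Commute ((u : G) : G ⧸ M) ((v : G) : G ⧸ M) := by
      rw [Commute, SemiconjBy]
      have h1 : ((⁅u, v⁆ : G) : G ⧸ M) = 1 := (QuotientGroup.eq_one_iff _).mpr huv
      have h2 : ((⁅u, v⁆ : G) : G ⧸ M) = ⁅(u : G ⧸ M), (v : G ⧸ M)⁆ := by
        simp [commutatorElement_def]
      rw [h2] at h1
      exact commutatorElement_eq_one_iff_mul_comm.mp h1
    intro w hw w' hw'
    have hwm : (w : G ⧸ M) ∈ closure ((QuotientGroup.mk' M) '' ({u, v} : Set G)) := by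
      rw [← MonoidHom.map_closure]
      exact Subgroup.mem_map_of_mem _ hw
    have hwm' : (w' : G ⧸ M) ∈ closure ((QuotientGroup.mk' M) '' ({u, v} : Set G)) := by
      rw [← MonoidHom.map_closure]
      exact Subgroup.mem_map_of_mem _ hw'
    refine commute_of_mem_closure ?_ hwm hwm'
    rintro s hs t ht
    rw [Set.image_pair] at hs ht
    rcases hs with rfl | hs <;> rcases ht with rfl | ht
    · exact Commute.refl _
    · rw [Set.mem_singleton_iff] at ht; subst ht; exact hcomm_uv
    · rw [Set.mem_singleton_iff] at hs; subst hs; exact hcomm_uv.symm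
    · rw [Set.mem_singleton_iff] at hs ht; subst hs; subst ht; exact Commute.refl _
  -- decompose x and y
  have hdec : ∀ a ∈ X, ∃ w ∈ closure ({u, v} : Set G), ∃ z ∈ Z, w * z = a := by
    intro a ha
    have hmem : a ∈ (↑(closure ({u, v} : Set G) ⊔ Z) : Set G) := hX ha
    rw [Subgroup.mul_normal] at hmem
    exact Set.mem_mul.mp hmem
  obtain ⟨w, hw, z, hz, hwz⟩ := hdec x hx
  obtain ⟨w', hw', z', hz', hwz'⟩ := hdec y hy
  have hxq : (x : G ⧸ M) = (w : G ⧸ M) * (z : G ⧸ M) := by rw [← hwz]; rfl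
  have hyq : (y : G ⧸ M) = (w' : G ⧸ M) * (z' : G ⧸ M) := by rw [← hwz']; rfl
  have hcomm : Commute (x : G ⧸ M) (y : G ⧸ M) := by
    rw [hxq, hyq]
    have c1 : Commute (w : G ⧸ M) (w' : G ⧸ M) := cw w hw w' hw'
    have c2 : Commute (w : G ⧸ M) (z' : G ⧸ M) := cz w (hcl hw) z' hz'
    have c3 : Commute (z : G ⧸ M) (w' : G ⧸ M) := (cz w' (hcl hw') z hz).symm
    have c4 : Commute (z : G ⧸ M) (z' : G ⧸ M) := cz z (hZX hz) z' hz'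
    exact Commute.mul_left (Commute.mul_right c1 c2) (Commute.mul_right c3 c4)
  exact hcomm.commutator_eq

lemma gen_sq {W : Type*} [Group W] [Finite W] (hp : p.Prime) (Y : Subgroup W)
    (hY : Nat.card Y ∣ p ^ 2) : ∃ u v, u ∈ Y ∧ v ∈ Y ∧ Y ≤ closure {u, v} := by
  haveI : Fact p.Prime := ⟨hp⟩
  rcases Subgroup.bot_or_exists_ne_one Y with hb | ⟨w, hw, hw1⟩
  · exact ⟨1, 1, one_mem Y, one_mem Y, hb ▸ bot_le⟩
  by_cases hT : Y ≤ zpowers w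
  · refine ⟨w, w, hw, hw, ?_⟩
    have : zpowers w = closure {w} := zpowers_eq_closure w
    refine hT.trans ?_
    rw [this]
    exact Subgroup.closure_mono (by simp)
  · obtain ⟨s, hs, hsw⟩ := SetLike.not_le_iff_exists.mp hT
    refine ⟨w, s, hw, hs, ?_⟩
    set T₂ := closure ({w, s} : Set W) with hT₂
    have hT₂Y : T₂ ≤ Y := by
      rw [hT₂, Subgroup.closure_le]
      rintro a (rfl | ha)
      · exact hw
      · rw [Set.mem_singleton_iff] at ha; subst ha; exact hs
    have hcT₂ : Nat.card T₂ ∣ p ^ 2 := (Subgroup.card_dvd_of_le hT₂Y).trans hY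
    have hwT₂ : w ∈ T₂ := Subgroup.subset_closure (by simp)
    have hsT₂ : s ∈ T₂ := Subgroup.subset_closure (by simp)
    have hne1 : Nat.card T₂ ≠ 1 := by
      intro h1
      rw [Subgroup.card_eq_one] at h1
      rw [h1] at hwT₂
      exact hw1 hwT₂
    have hnep : Nat.card T₂ ≠ p := by
      intro hcp
      have hT₁T₂ : zpowers w ≤ T₂ := by
        rw [zpowers_eq_closure]
        exact Subgroup.closure_mono (by simp)
      have hd : Nat.card (zpowers w) ∣ p := hcp ▸ Subgroup.card_dvd_of_le hT₁T₂
      have h1 : Nat.card (zpowers w) ≠ 1 := by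
        intro h1
        rw [Subgroup.card_eq_one] at h1
        have : w ∈ zpowers w := mem_zpowers w
        rw [h1] at this
        exact hw1 this
      have : Nat.card (zpowers w) = p := ((Nat.Prime.eq_one_or_self_of_dvd hp) _ hd).resolve_left h1
      have heq : zpowers w = T₂ :=
        Subgroup.eq_of_le_of_card_ge hT₁T₂ (by rw [this, hcp])
      exact hsw (heq ▸ hsT₂)
    have hc2 : Nat.card T₂ = p ^ 2 := by
      obtain ⟨j, hj, hje⟩ := (Nat.dvd_prime_pow hp).mp hcT₂
      interval_cases j
      · rw [pow_zero] at hje; exact absurd hje hne1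
      · rw [pow_one] at hje; exact absurd hje hnep
      · exact hje
    have hYcard : Nat.card Y = p ^ 2 := by
      have h1 : Nat.card T₂ ≤ Nat.card Y := Subgroup.card_le_of_le hT₂Y
      have h2 : Nat.card Y ≤ p ^ 2 := Nat.le_of_dvd (pow_pos hp.pos 2) hY
      omega
    exact (Subgroup.eq_of_le_of_card_ge hT₂Y (by rw [hYcard, hc2])).symm.le

lemma gen_p {W : Type*} [Group W] [Finite W] (hp : p.Prime) (Y : Subgroup W)
    (hY : Nat.card Y ∣ p) : ∃ u, u ∈ Y ∧ Y ≤ closure {u} := by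
  haveI : Fact p.Prime := ⟨hp⟩
  rcases (Nat.Prime.eq_one_or_self_of_dvd hp) _ hY with h1 | hcp
  · rw [Subgroup.card_eq_one] at h1
    exact ⟨1, one_mem Y, by rw [h1]; exact bot_le⟩
  · haveI : IsCyclic Y := isCyclic_of_prime_card hcp
    obtain ⟨g, hg⟩ := IsCyclic.exists_generator (α := Y)
    refine ⟨(g : W), g.2, ?_⟩
    intro y hy
    obtain ⟨k, hk⟩ := Subgroup.mem_zpowers_iff.mp (hg ⟨y, hy⟩)
    have : ((g : W) ^ k) = y := by
      have := congrArg (Subtype.val) hk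
      simpa using this
    rw [← zpowers_eq_closure]
    exact this ▸ zpow_mem_zpowers _ k

lemma quot_card [Finite G] {Z X : Subgroup G} [Z.Normal] (hZX : Z ≤ X) :
    Nat.card (X.map (QuotientGroup.mk' Z)) * Nat.card Z = Nat.card X := by
  have h1 : ((QuotientGroup.mk' Z).ker).relIndex X = Nat.card (X.map (QuotientGroup.mk' Z)) :=
    Subgroup.relIndex_ker X (QuotientGroup.mk' Z)
  rw [QuotientGroup.ker_mk'] at h1
  have h2 := card_of_le hZX
  rw [h2, h1]

lemma sup_of_map_le_closure {Z X : Subgroup G} [Z.Normal] {u v : G}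
    (h : X.map (QuotientGroup.mk' Z) ≤
      closure {(QuotientGroup.mk' Z) u, (QuotientGroup.mk' Z) v}) :
    X ≤ closure {u, v} ⊔ Z := by
  set q := QuotientGroup.mk' Z with hq
  have h1 : closure {q u, q v} = (closure ({u, v} : Set G)).map q := by
    rw [MonoidHom.map_closure, Set.image_pair]
  have h2 : X ≤ comap q (map q X) := Subgroup.le_comap_map _ _
  have h3 : comap q (map q X) ≤ comap q ((closure ({u, v} : Set G)).map q) :=
    Subgroup.comap_mono (h.trans_eq h1)
  have h4 : comap q ((closure ({u, v} : Set G)).map q) = closure ({u, v} : Set G) ⊔ Z := by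
    rw [Subgroup.comap_map_eq, QuotientGroup.ker_mk']
  exact h2.trans (h3.trans_eq h4)

lemma exists_two_gen [Finite G] (hp : p.Prime) {Z X : Subgroup G} [Z.Normal] (hZX : Z ≤ X)
    (hcard : Nat.card X ∣ p ^ 2 * Nat.card Z) :
    ∃ u v, u ∈ X ∧ v ∈ X ∧ X ≤ closure {u, v} ⊔ Z := by
  set q := QuotientGroup.mk' Z with hq
  have hYc : Nat.card (X.map q) ∣ p ^ 2 := by
    have h1 := quot_card hZX
    have h2 : Nat.card (X.map q) * Nat.card Z ∣ p ^ 2 * Nat.card Z := by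
      rw [h1]; exact hcard
    exact (Nat.mul_dvd_mul_iff_right (Nat.card_pos : 0 < Nat.card Z)).mp h2
  obtain ⟨ub, vb, hub, hvb, hYle⟩ := gen_sq hp (X.map q) hYc
  obtain ⟨u, hu, huq⟩ := Subgroup.mem_map.mp hub
  obtain ⟨v, hv, hvq⟩ := Subgroup.mem_map.mp hvb
  refine ⟨u, v, hu, hv, sup_of_map_le_closure (Z := Z) ?_⟩
  rw [huq, hvq]
  exact hYle

lemma exists_one_gen [Finite G] (hp : p.Prime) {Z X : Subgroup G} [Z.Normal] (hZX : Z ≤ X)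
    (hcard : Nat.card X ∣ p * Nat.card Z) :
    ∃ u, u ∈ X ∧ X ≤ closure {u, u} ⊔ Z := by
  set q := QuotientGroup.mk' Z with hq
  have hYc : Nat.card (X.map q) ∣ p := by
    have h1 := quot_card hZX
    have h2 : Nat.card (X.map q) * Nat.card Z ∣ p * Nat.card Z := by
      rw [h1]; exact hcard
    exact (Nat.mul_dvd_mul_iff_right (Nat.card_pos : 0 < Nat.card Z)).mp h2
  obtain ⟨ub, hub, hYle⟩ := gen_p hp (X.map q) hYc
  obtain ⟨u, hu, huq⟩ := Subgroup.mem_map.mp hub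
  refine ⟨u, hu, sup_of_map_le_closure (Z := Z) (u := u) (v := u) ?_⟩
  rw [huq]
  have : ({ub, ub} : Set (G ⧸ Z)) = {ub} := by simp
  rw [this]
  exact hYle

lemma join_normal_of_conj {c : G} {E : Subgroup G} [hE : E.Normal]
    (hc : ∀ g : G, g * c * g⁻¹ * c⁻¹ ∈ E) : (zpowers c ⊔ E).Normal := by
  constructor
  intro n hn g
  have hmem : n ∈ (↑(zpowers c ⊔ E) : Set G) := hn
  rw [Subgroup.mul_normal] at hmem
  obtain ⟨a, ha, e, he, hae⟩ := Set.mem_mul.mp hmem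
  obtain ⟨k, hk⟩ := mem_zpowers_iff.mp ha
  have hgc : g * c * g⁻¹ ∈ zpowers c ⊔ E := by
    have h1 : g * c * g⁻¹ = (g * c * g⁻¹ * c⁻¹) * c := by group
    rw [h1]
    exact mul_mem ((le_sup_right : E ≤ zpowers c ⊔ E) (hc g))
      ((le_sup_left : zpowers c ≤ zpowers c ⊔ E) (mem_zpowers c))
  have hga : g * a * g⁻¹ ∈ zpowers c ⊔ E := by
    rw [← hk]
    have h2 : g * c ^ k * g⁻¹ = (g * c * g⁻¹) ^ k := by
      have := map_zpow (MulAut.conj g).toMonoidHom c k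
      simp only [MulAut.conj] at this
      simpa using this.symm
    rw [h2]
    exact zpow_mem hgc k
  have hge : g * e * g⁻¹ ∈ zpowers c ⊔ E :=
    (le_sup_right : E ≤ zpowers c ⊔ E) (hE.conj_mem e he g)
  have h3 : g * n * g⁻¹ = (g * a * g⁻¹) * (g * e * g⁻¹) := by
    rw [← hae]; group
  rw [h3]
  exact mul_mem hga hge


section Main

variable {G : Type*} [Group G] {p : ℕ}

attribute [local instance] derivedSeries_normal

local notation "DS" => derivedSeries G

lemma ds_succ_le (n : ℕ) : DS (n + 1) ≤ DS n := by
  rw [derivedSeries_succ]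
  exact Subgroup.commutator_le_left _ _

lemma small_card [Finite G] {d : ℕ} (h : IsSmallDerivedQuotient p G d) :
    Nat.card (DS d) = p ^ (2 ^ d + 1) * Nat.card (DS (d + 1)) := by
  rw [card_of_le (ds_succ_le d), h.2]

lemma hall_lite [Finite G] (hp : p.Prime) (hG : IsPGroup p G) {e k : ℕ}
    (hsm : IsSmallDerivedQuotient p G e) (hL : DS e ≤ Subgroup.lowerCentralSeries (⊤ : Subgroup G) k) :
    k ≤ 2 ^ e := by
  have hcard := small_card hsm
  have hne : DS (e + 1) ≠ ⊥ := hsm.1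
  have h1 : DS (e + 1) ≤ ncc (DS e) (k + 1) := by
    rw [derivedSeries_succ]
    exact (Subgroup.commutator_mono le_rfl hL).trans (comm_lcs_le_ncc _ k)
  have hnb : ncc (DS e) (k + 1) ≠ ⊥ := fun hb => hne (le_bot_iff.mp (hb ▸ h1))
  have h2 := ncc_chain_card hp hG (DS e) (k + 1) hnb
  have h3 : Nat.card (DS (e + 1)) ≤ Nat.card (ncc (DS e) (k + 1)) :=
    Subgroup.card_le_of_le h1
  have h4 : p ^ (k + 1) * Nat.card (DS (e + 1)) ≤ p ^ (2 ^ e + 1) * Nat.card (DS (e + 1)) := by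
    calc p ^ (k + 1) * Nat.card (DS (e + 1)) ≤ p ^ (k + 1) * Nat.card (ncc (DS e) (k + 1)) :=
          Nat.mul_le_mul_left _ h3
      _ ≤ Nat.card (DS e) := h2
      _ = p ^ (2 ^ e + 1) * Nat.card (DS (e + 1)) := hcard
  have h5 : p ^ (k + 1) ≤ p ^ (2 ^ e + 1) :=
    Nat.le_of_mul_le_mul_right h4 (card_pos' _)
  have h6 : k + 1 ≤ 2 ^ e + 1 := (Nat.pow_le_pow_iff_right hp.one_lt).mp h5
  omega

lemma dbl {n k : ℕ} (h : DS n ≤ Subgroup.lowerCentralSeries (⊤ : Subgroup G) k) (j : ℕ) :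
    DS (n + j) ≤ Subgroup.lowerCentralSeries (⊤ : Subgroup G) (2 ^ j * (k + 1) - 1) := by
  induction j with
  | zero => simpa using h
  | succ j ih =>
    have hpos : 1 ≤ 2 ^ j * (k + 1) := Nat.one_le_iff_ne_zero.mpr (by positivity)
    set K := 2 ^ j * (k + 1) - 1 with hK
    have hKe : K + 1 = 2 ^ j * (k + 1) := by omega
    have h2 : 2 ^ (j + 1) * (k + 1) - 1 = K + K + 1 := by
      have : 2 ^ (j + 1) * (k + 1) = 2 * (2 ^ j * (k + 1)) := by rw [pow_succ]; ring
      omega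
    have h3 : DS (n + (j + 1)) = ⁅DS (n + j), DS (n + j)⁆ := derivedSeries_succ G (n + j)
    rw [h3, h2]
    exact (Subgroup.commutator_mono ih ih).trans (lcs_comm K K)

/-- The key structural dichotomy at a small index `a`. -/
lemma structure_lemma [Finite G] (hp : p.Prime) (hG : IsPGroup p G) {a ka : ℕ}
    (hka : ka + 1 = 2 ^ a) (hsm : IsSmallDerivedQuotient p G a) :
    (DS (a + 1) ≤ ⁅DS a, ncc (DS a) 1⁆) ∨
    (Nat.card (DS a) = p ^ 2 * Nat.card (ncc (DS a) 1) ∧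
      DS (a + 2) ≤ ⁅DS (a + 1), DS (a + 1) ⊓ Subgroup.lowerCentralSeries (⊤ : Subgroup G) (2 * ka + 2)⁆) := by
  set A := DS a with hA_def
  set B := DS (a + 1) with hB_def
  set A₁ := ncc A 1 with hA₁_def
  haveI : A.Normal := derivedSeries_normal G a
  haveI : B.Normal := derivedSeries_normal G (a + 1)
  have hA : A ≤ Subgroup.lowerCentralSeries (⊤ : Subgroup G) ka := ds_le_lcs a ka hka
  have hBA : B = ⁅A, A⁆ := derivedSeries_succ G a
  have hBne : B ≠ ⊥ := hsm.1
  have hcard : Nat.card A = p ^ (ka + 2) * Nat.card B := by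
    have := small_card hsm
    rw [← hB_def, ← hA_def] at this
    rw [this]
    congr 2
    omega
  have hA₁A : A₁ ≤ A := ncc_succ_le A 0
  have hBncc : B ≤ ncc A (ka + 1) := by
    rw [hBA]
    exact (Subgroup.commutator_mono le_rfl hA).trans (comm_lcs_le_ncc _ ka)
  -- chain bound within A₁
  have hnccA₁ : ncc A₁ ka = ncc A (ka + 1) := by
    rw [hA₁_def, ncc_add]
    congr 1
    omega
  have hnb : ncc A₁ ka ≠ ⊥ := by
    rw [hnccA₁]
    exact fun hb => hBne (le_bot_iff.mp (hb ▸ hBncc))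
  have hchain : p ^ ka * Nat.card B ≤ Nat.card A₁ := by
    have h1 := ncc_chain_card hp hG A₁ ka hnb
    have h2 : Nat.card B ≤ Nat.card (ncc A₁ ka) :=
      Subgroup.card_le_of_le (hBncc.trans_eq hnccA₁.symm)
    calc p ^ ka * Nat.card B ≤ p ^ ka * Nat.card (ncc A₁ ka) := Nat.mul_le_mul_left _ h2
      _ ≤ Nat.card A₁ := h1
  set r := A₁.relIndex A with hr_def
  have hrA : Nat.card A = r * Nat.card A₁ := card_of_le hA₁A
  have hrle : r ≤ p ^ 2 := by
    have h1 : r * (p ^ ka * Nat.card B) ≤ r * Nat.card A₁ :=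
      Nat.mul_le_mul_left _ hchain
    rw [← hrA, hcard] at h1
    have h2 : r * p ^ ka ≤ p ^ 2 * p ^ ka := by
      have h3 : (r * p ^ ka) * Nat.card B ≤ (p ^ 2 * p ^ ka) * Nat.card B := by
        calc (r * p ^ ka) * Nat.card B = r * (p ^ ka * Nat.card B) := by ring
          _ ≤ p ^ (ka + 2) * Nat.card B := h1
          _ = (p ^ 2 * p ^ ka) * Nat.card B := by rw [← pow_add]; ring_nf
      exact Nat.le_of_mul_le_mul_right h3 (card_pos' _)
    exact Nat.le_of_mul_le_mul_right h2 (pow_pos hp.pos ka)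
  have hrdvd : r ∣ p ^ 2 := by
    -- r divides card A which is a p-power
    haveI : Fact p.Prime := ⟨hp⟩
    obtain ⟨n, hn⟩ := IsPGroup.iff_card.mp hG
    have h1 : r ∣ p ^ n := by
      have h2 : r ∣ Nat.card A := ⟨Nat.card A₁, hrA⟩
      rw [← hn]
      exact h2.trans (Subgroup.card_subgroup_dvd_card A)
    obtain ⟨j, hj, hje⟩ := (Nat.dvd_prime_pow hp).mp h1
    have hj2 : j ≤ 2 := by
      by_contra hj3
      push_neg at hj3
      have : p ^ 3 ≤ p ^ j := Nat.pow_le_pow_right hp.pos hj3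
      have hp3 : p ^ 2 < p ^ 3 := Nat.pow_lt_pow_right hp.one_lt (by omega)
      omega
    rw [hje]
    exact pow_dvd_pow p hj2
  -- dichotomy
  rcases (Nat.dvd_prime_pow hp).mp hrdvd with ⟨j, hj, hje⟩
  have hcases : r ∣ p ∨ r = p ^ 2 := by
    interval_cases j
    · left; rw [hje, pow_zero]; exact one_dvd p
    · left; rw [hje, pow_one]
    · right; exact hje
  rcases hcases with hrp | hrp2
  · -- r ∣ p : one generator mod A₁
    left
    have hdvd : Nat.card A ∣ p * Nat.card A₁ := by
      rw [hrA]
      exact Nat.mul_dvd_mul_right hrp _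
    obtain ⟨u, hu, hule⟩ := exists_one_gen hp hA₁A hdvd
    have := key_comm (M := ⁅A, A₁⁆) hu hu hA₁A hule le_rfl
      (by rw [commutatorElement_self]; exact one_mem _)
    rw [← hBA] at this
    exact this
  · -- r = p^2 : two generators mod A₁
    right
    constructor
    · rw [hrA, hrp2]
    set E := B ⊓ Subgroup.lowerCentralSeries (⊤ : Subgroup G) (2 * ka + 2) with hE_def
    haveI : E.Normal := Subgroup.normal_inf_normal _ _
    have hBL : B ≤ Subgroup.lowerCentralSeries (⊤ : Subgroup G) (2 * ka + 1) := by
      rw [hBA]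
      calc ⁅A, A⁆ ≤ ⁅Subgroup.lowerCentralSeries (⊤ : Subgroup G) ka, Subgroup.lowerCentralSeries (⊤ : Subgroup G) ka⁆ :=
            Subgroup.commutator_mono hA hA
        _ ≤ Subgroup.lowerCentralSeries (⊤ : Subgroup G) (ka + ka + 1) := lcs_comm ka ka
        _ = Subgroup.lowerCentralSeries (⊤ : Subgroup G) (2 * ka + 1) := by congr 1; ring
    have hA₁L : A₁ ≤ Subgroup.lowerCentralSeries (⊤ : Subgroup G) (ka + 1) := by
      rw [hA₁_def]
      show ⁅A, ⊤⁆ ≤ _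
      calc ⁅A, ⊤⁆ ≤ ⁅Subgroup.lowerCentralSeries (⊤ : Subgroup G) ka, Subgroup.lowerCentralSeries (⊤ : Subgroup G) 0⁆ :=
            Subgroup.commutator_mono hA (by rw [Subgroup.lowerCentralSeries_zero])
        _ ≤ Subgroup.lowerCentralSeries (⊤ : Subgroup G) (ka + 0 + 1) := lcs_comm ka 0
        _ = Subgroup.lowerCentralSeries (⊤ : Subgroup G) (ka + 1) := by congr 1
    have hAA₁E : ⁅A, A₁⁆ ≤ E := by
      rw [hE_def]
      refine le_inf ?_ ?_
      · rw [hBA]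
        exact Subgroup.commutator_mono le_rfl hA₁A
      · calc ⁅A, A₁⁆ ≤ ⁅Subgroup.lowerCentralSeries (⊤ : Subgroup G) ka, Subgroup.lowerCentralSeries (⊤ : Subgroup G) (ka + 1)⁆ :=
              Subgroup.commutator_mono hA hA₁L
          _ ≤ Subgroup.lowerCentralSeries (⊤ : Subgroup G) (ka + (ka + 1) + 1) := lcs_comm ka (ka + 1)
          _ = Subgroup.lowerCentralSeries (⊤ : Subgroup G) (2 * ka + 2) := by congr 1; ring
    have hBtopE : ⁅B, (⊤ : Subgroup G)⁆ ≤ E := by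
      rw [hE_def]
      refine le_inf (Subgroup.commutator_le_left _ _) ?_
      calc ⁅B, (⊤ : Subgroup G)⁆
          ≤ ⁅Subgroup.lowerCentralSeries (⊤ : Subgroup G) (2 * ka + 1), Subgroup.lowerCentralSeries (⊤ : Subgroup G) 0⁆ :=
            Subgroup.commutator_mono hBL (by rw [Subgroup.lowerCentralSeries_zero])
        _ ≤ Subgroup.lowerCentralSeries (⊤ : Subgroup G) (2 * ka + 1 + 0 + 1) := lcs_comm _ 0
        _ = Subgroup.lowerCentralSeries (⊤ : Subgroup G) (2 * ka + 2) := by congr 1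
    have hdvd2 : Nat.card A ∣ p ^ 2 * Nat.card A₁ := by
      rw [hrA, hrp2]
    obtain ⟨u, v, hu, hv, huvle⟩ := exists_two_gen hp hA₁A hdvd2
    set c := ⁅u, v⁆ with hc_def
    have hcB : c ∈ B := by
      rw [hBA]
      exact Subgroup.commutator_mem_commutator hu hv
    set M := Subgroup.zpowers c ⊔ E with hM_def
    haveI : M.Normal := by
      refine join_normal_of_conj (fun g => ?_)
      have h1 : g * c * g⁻¹ * c⁻¹ = ⁅g, c⁆ := rfl
      rw [h1]
      have h2 : ⁅g, c⁆ ∈ ⁅(⊤ : Subgroup G), B⁆ :=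
        Subgroup.commutator_mem_commutator (Subgroup.mem_top g) hcB
      rw [Subgroup.commutator_comm] at h2
      exact hBtopE h2
    have hBM : B ≤ M := by
      rw [hBA]
      refine key_comm hu hv hA₁A huvle (hAA₁E.trans le_sup_right) ?_
      exact (le_sup_left : Subgroup.zpowers c ≤ M) (Subgroup.mem_zpowers c)
    -- second application: C ≤ [B, E]
    have hBc : B ≤ Subgroup.closure {c, c} ⊔ E := by
      have h1 : ({c, c} : Set G) = {c} := by simp
      rw [h1, ← Subgroup.zpowers_eq_closure]
      exact hBM
    have hCE : ⁅B, B⁆ ≤ ⁅B, E⁆ :=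
      key_comm hcB hcB inf_le_left hBc le_rfl
        (by rw [commutatorElement_self]; exact one_mem _)
    have hC : DS (a + 2) = ⁅B, B⁆ := derivedSeries_succ G (a + 1)
    rw [hC]
    exact hCE

lemma c_deep [Finite G] (hp : p.Prime) (hG : IsPGroup p G) {a ka : ℕ}
    (hka : ka + 1 = 2 ^ a) (hsm : IsSmallDerivedQuotient p G a) :
    DS (a + 2) ≤ Subgroup.lowerCentralSeries (⊤ : Subgroup G) (4 * ka + 4) := by
  have hA : DS a ≤ Subgroup.lowerCentralSeries (⊤ : Subgroup G) ka := ds_le_lcs a ka hka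
  have hA₁L : ncc (DS a) 1 ≤ Subgroup.lowerCentralSeries (⊤ : Subgroup G) (ka + 1) := by
    show ⁅DS a, ⊤⁆ ≤ _
    calc ⁅DS a, ⊤⁆ ≤ ⁅Subgroup.lowerCentralSeries (⊤ : Subgroup G) ka, Subgroup.lowerCentralSeries (⊤ : Subgroup G) 0⁆ :=
          Subgroup.commutator_mono hA (by rw [Subgroup.lowerCentralSeries_zero])
      _ ≤ Subgroup.lowerCentralSeries (⊤ : Subgroup G) (ka + 0 + 1) := lcs_comm ka 0
      _ = Subgroup.lowerCentralSeries (⊤ : Subgroup G) (ka + 1) := by congr 1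
  have hBL : DS (a + 1) ≤ Subgroup.lowerCentralSeries (⊤ : Subgroup G) (2 * ka + 1) := by
    rw [derivedSeries_succ]
    calc ⁅DS a, DS a⁆ ≤ ⁅Subgroup.lowerCentralSeries (⊤ : Subgroup G) ka, Subgroup.lowerCentralSeries (⊤ : Subgroup G) ka⁆ :=
          Subgroup.commutator_mono hA hA
      _ ≤ Subgroup.lowerCentralSeries (⊤ : Subgroup G) (ka + ka + 1) := lcs_comm ka ka
      _ = Subgroup.lowerCentralSeries (⊤ : Subgroup G) (2 * ka + 1) := by congr 1; ring
  rcases structure_lemma hp hG hka hsm with h | ⟨_, h⟩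
  · -- B ≤ [A, A₁] ≤ L (2ka+2); C ≤ L (4ka+5) ≤ L (4ka+4)
    have hB2 : DS (a + 1) ≤ Subgroup.lowerCentralSeries (⊤ : Subgroup G) (2 * ka + 2) := by
      refine h.trans ?_
      calc ⁅DS a, ncc (DS a) 1⁆
          ≤ ⁅Subgroup.lowerCentralSeries (⊤ : Subgroup G) ka, Subgroup.lowerCentralSeries (⊤ : Subgroup G) (ka + 1)⁆ :=
            Subgroup.commutator_mono hA hA₁L
        _ ≤ Subgroup.lowerCentralSeries (⊤ : Subgroup G) (ka + (ka + 1) + 1) := lcs_comm ka (ka + 1)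
        _ = Subgroup.lowerCentralSeries (⊤ : Subgroup G) (2 * ka + 2) := by congr 1; ring
    have hC : DS (a + 2) ≤ Subgroup.lowerCentralSeries (⊤ : Subgroup G) (4 * ka + 5) := by
      rw [derivedSeries_succ]
      calc ⁅DS (a+1), DS (a+1)⁆
          ≤ ⁅Subgroup.lowerCentralSeries (⊤ : Subgroup G) (2*ka+2), Subgroup.lowerCentralSeries (⊤ : Subgroup G) (2*ka+2)⁆ :=
            Subgroup.commutator_mono hB2 hB2
        _ ≤ Subgroup.lowerCentralSeries (⊤ : Subgroup G) ((2*ka+2) + (2*ka+2) + 1) := lcs_comm _ _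
        _ = Subgroup.lowerCentralSeries (⊤ : Subgroup G) (4 * ka + 5) := by congr 1; ring
    exact hC.trans (Subgroup.lowerCentralSeries_antitone _ (by omega))
  · -- C ≤ [B, E] ≤ L(4ka+4)
    refine h.trans ?_
    calc ⁅DS (a+1), DS (a+1) ⊓ Subgroup.lowerCentralSeries (⊤ : Subgroup G) (2*ka+2)⁆
        ≤ ⁅Subgroup.lowerCentralSeries (⊤ : Subgroup G) (2*ka+1), Subgroup.lowerCentralSeries (⊤ : Subgroup G) (2*ka+2)⁆ :=
          Subgroup.commutator_mono hBL inf_le_right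
      _ ≤ Subgroup.lowerCentralSeries (⊤ : Subgroup G) ((2*ka+1) + (2*ka+2) + 1) := lcs_comm _ _
      _ = Subgroup.lowerCentralSeries (⊤ : Subgroup G) (4 * ka + 4) := by congr 1; ring

lemma small_le [Finite G] (hp : p.Prime) (hG : IsPGroup p G) {a e : ℕ}
    (hsa : IsSmallDerivedQuotient p G a) (hse : IsSmallDerivedQuotient p G e)
    (hae : a < e) : e ≤ a + 2 := by
  by_contra hcon
  push_neg at hcon
  set j := e - (a + 2) with hj_def
  have hj1 : 1 ≤ j := by omega
  have he : e = (a + 2) + j := by omega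
  have h2a : 0 < 2 ^ a := Nat.pow_pos (by norm_num)
  set ka := 2 ^ a - 1 with hka_def
  have hka : ka + 1 = 2 ^ a := by omega
  have hC := c_deep hp hG hka hsa
  have hdb := dbl hC j
  rw [← he] at hdb
  have hhl := hall_lite hp hG hse hdb
  -- arithmetic contradiction
  have h1 : 2 ^ j * (4 * ka + 4 + 1) = 2 ^ e + 2 ^ j := by
    have h2 : 4 * ka + 4 + 1 = 4 * 2 ^ a + 1 := by omega
    rw [h2, he]
    have h3 : 2 ^ ((a + 2) + j) = 2 ^ a * 4 * 2 ^ j := by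
      rw [pow_add, pow_add]
      norm_num
    rw [h3]
    ring
  have h4 : 2 ≤ 2 ^ j := by
    calc (2:ℕ) = 2 ^ 1 := (pow_one 2).symm
      _ ≤ 2 ^ j := Nat.pow_le_pow_right (by norm_num) hj1
  have h5 : 0 < 2 ^ j * (4 * ka + 4 + 1) := by positivity
  omega

lemma no_triple [Finite G] (hp : p.Prime) (hG : IsPGroup p G) {a : ℕ}
    (h0 : IsSmallDerivedQuotient p G a) (h1 : IsSmallDerivedQuotient p G (a + 1))
    (h2 : IsSmallDerivedQuotient p G (a + 2)) : False := by
  have h2a : 0 < 2 ^ a := Nat.pow_pos (by norm_num)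
  set ka := 2 ^ a - 1 with hka_def
  have hka : ka + 1 = 2 ^ a := by omega
  set A := DS a with hA_def
  set B := DS (a + 1) with hB_def
  set C := DS (a + 2) with hC_def
  set D := DS (a + 3) with hD_def
  have hA : A ≤ Subgroup.lowerCentralSeries (⊤ : Subgroup G) ka := ds_le_lcs a ka hka
  have hDne : D ≠ ⊥ := h2.1
  have hcA : Nat.card A = p ^ (ka + 2) * Nat.card B := by
    have := small_card h0
    rw [← hA_def, ← hB_def] at this
    rw [this]; congr 2; omega
  have hcB : Nat.card B = p ^ (2 * ka + 3) * Nat.card C := by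
    have := small_card h1
    rw [show a + 1 + 1 = a + 2 from rfl, ← hB_def, ← hC_def] at this
    rw [this]; congr 2
    have : 2 ^ (a + 1) = 2 * 2 ^ a := by rw [pow_succ]; ring
    omega
  have hcC : Nat.card C = p ^ (4 * ka + 5) * Nat.card D := by
    have := small_card h2
    rw [show a + 2 + 1 = a + 3 from rfl, ← hC_def, ← hD_def] at this
    rw [this]; congr 2
    have : 2 ^ (a + 2) = 4 * 2 ^ a := by rw [pow_add]; norm_num; omega
    omega
  have hcAD : Nat.card A = p ^ (7 * ka + 10) * Nat.card D := by
    rw [hcA, hcB, hcC, ← mul_assoc, ← mul_assoc, ← pow_add, ← pow_add]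
    congr 2
    ring
  have hA₁L : ncc A 1 ≤ Subgroup.lowerCentralSeries (⊤ : Subgroup G) (ka + 1) := by
    show ⁅A, ⊤⁆ ≤ _
    calc ⁅A, ⊤⁆ ≤ ⁅Subgroup.lowerCentralSeries (⊤ : Subgroup G) ka, Subgroup.lowerCentralSeries (⊤ : Subgroup G) 0⁆ :=
          Subgroup.commutator_mono hA (by rw [Subgroup.lowerCentralSeries_zero])
      _ ≤ Subgroup.lowerCentralSeries (⊤ : Subgroup G) (ka + 0 + 1) := lcs_comm ka 0
      _ = Subgroup.lowerCentralSeries (⊤ : Subgroup G) (ka + 1) := by congr 1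
  have hBL : B ≤ Subgroup.lowerCentralSeries (⊤ : Subgroup G) (2 * ka + 1) := by
    rw [hB_def, derivedSeries_succ]
    calc ⁅DS a, DS a⁆ ≤ ⁅Subgroup.lowerCentralSeries (⊤ : Subgroup G) ka, Subgroup.lowerCentralSeries (⊤ : Subgroup G) ka⁆ :=
          Subgroup.commutator_mono hA hA
      _ ≤ Subgroup.lowerCentralSeries (⊤ : Subgroup G) (ka + ka + 1) := lcs_comm ka ka
      _ = Subgroup.lowerCentralSeries (⊤ : Subgroup G) (2 * ka + 1) := by congr 1; ring
  -- final contradiction from a depth bound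
  have final : ∀ t : ℕ, 7 * ka + 10 < t → D ≤ ncc A t → False := by
    intro t ht hDt
    have hnb : ncc A t ≠ ⊥ := fun hb => hDne (le_bot_iff.mp (hb ▸ hDt))
    have hch := ncc_chain_card hp hG A t hnb
    have hle : Nat.card D ≤ Nat.card (ncc A t) := Subgroup.card_le_of_le hDt
    have hbig : p ^ t * Nat.card D ≤ Nat.card A := by
      calc p ^ t * Nat.card D ≤ p ^ t * Nat.card (ncc A t) := Nat.mul_le_mul_left _ hle
        _ ≤ Nat.card A := hch
    rw [hcAD] at hbig
    have hpow : p ^ t ≤ p ^ (7 * ka + 10) := Nat.le_of_mul_le_mul_right hbig (card_pos' _)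
    have := (Nat.pow_le_pow_iff_right hp.one_lt).mp hpow
    omega
  rcases structure_lemma hp hG hka h0 with hstr | ⟨hr, hstr⟩
  · -- branch r ≤ p : B ≤ [A, A₁], get D ≤ ncc A (7ka+11)
    have hBncc : B ≤ ncc A (ka + 2) := by
      refine hstr.trans ?_
      calc ⁅A, ncc A 1⁆ ≤ ⁅A, Subgroup.lowerCentralSeries (⊤ : Subgroup G) (ka + 1)⁆ :=
            Subgroup.commutator_mono le_rfl hA₁L
        _ ≤ ncc A (ka + 2) := comm_lcs_le_ncc A (ka + 1)
    have hB2 : B ≤ Subgroup.lowerCentralSeries (⊤ : Subgroup G) (2 * ka + 2) := by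
      refine hstr.trans ?_
      calc ⁅A, ncc A 1⁆
          ≤ ⁅Subgroup.lowerCentralSeries (⊤ : Subgroup G) ka, Subgroup.lowerCentralSeries (⊤ : Subgroup G) (ka + 1)⁆ :=
            Subgroup.commutator_mono hA hA₁L
        _ ≤ Subgroup.lowerCentralSeries (⊤ : Subgroup G) (ka + (ka + 1) + 1) := lcs_comm ka (ka + 1)
        _ = Subgroup.lowerCentralSeries (⊤ : Subgroup G) (2 * ka + 2) := by congr 1; ring
    have hCncc : C ≤ ncc A (3 * ka + 5) := by
      rw [hC_def, derivedSeries_succ]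
      calc ⁅DS (a+1), DS (a+1)⁆ ≤ ⁅B, Subgroup.lowerCentralSeries (⊤ : Subgroup G) (2 * ka + 2)⁆ :=
            Subgroup.commutator_mono le_rfl hB2
        _ ≤ ncc B (2 * ka + 3) := comm_lcs_le_ncc B (2 * ka + 2)
        _ ≤ ncc (ncc A (ka + 2)) (2 * ka + 3) := ncc_mono hBncc _
        _ = ncc A (3 * ka + 5) := by rw [ncc_add]; congr 1; ring
    have hCL : C ≤ Subgroup.lowerCentralSeries (⊤ : Subgroup G) (4 * ka + 5) := by
      rw [hC_def, derivedSeries_succ]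
      calc ⁅DS (a+1), DS (a+1)⁆
          ≤ ⁅Subgroup.lowerCentralSeries (⊤ : Subgroup G) (2*ka+2), Subgroup.lowerCentralSeries (⊤ : Subgroup G) (2*ka+2)⁆ :=
            Subgroup.commutator_mono hB2 hB2
        _ ≤ Subgroup.lowerCentralSeries (⊤ : Subgroup G) ((2*ka+2) + (2*ka+2) + 1) := lcs_comm _ _
        _ = Subgroup.lowerCentralSeries (⊤ : Subgroup G) (4 * ka + 5) := by congr 1; ring
    have hDncc : D ≤ ncc A (7 * ka + 11) := by
      rw [hD_def, derivedSeries_succ]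
      calc ⁅DS (a+2), DS (a+2)⁆ ≤ ⁅C, Subgroup.lowerCentralSeries (⊤ : Subgroup G) (4 * ka + 5)⁆ :=
            Subgroup.commutator_mono le_rfl hCL
        _ ≤ ncc C (4 * ka + 6) := comm_lcs_le_ncc C (4 * ka + 5)
        _ ≤ ncc (ncc A (3 * ka + 5)) (4 * ka + 6) := ncc_mono hCncc _
        _ = ncc A (7 * ka + 11) := by rw [ncc_add]; congr 1; ring
    exact final (7 * ka + 11) (by omega) hDncc
  · -- branch r = p^2
    haveI : A.Normal := derivedSeries_normal G a
    haveI : B.Normal := derivedSeries_normal G (a + 1)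
    haveI : C.Normal := derivedSeries_normal G (a + 2)
    set A₁ := ncc A 1 with hA₁_def
    set C₁ := ncc C 1 with hC₁_def
    have hBncc : B ≤ ncc A (ka + 1) := by
      rw [hB_def, derivedSeries_succ]
      exact (Subgroup.commutator_mono le_rfl hA).trans (comm_lcs_le_ncc _ ka)
    have hCncc : C ≤ ncc A (3 * ka + 4) := by
      refine hstr.trans ?_
      calc ⁅B, B ⊓ Subgroup.lowerCentralSeries (⊤ : Subgroup G) (2*ka+2)⁆
          ≤ ⁅B, Subgroup.lowerCentralSeries (⊤ : Subgroup G) (2 * ka + 2)⁆ :=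
            Subgroup.commutator_mono le_rfl inf_le_right
        _ ≤ ncc B (2 * ka + 3) := comm_lcs_le_ncc B (2 * ka + 2)
        _ ≤ ncc (ncc A (ka + 1)) (2 * ka + 3) := ncc_mono hBncc _
        _ = ncc A (3 * ka + 4) := by rw [ncc_add]; congr 1; ring
    have hCL : C ≤ Subgroup.lowerCentralSeries (⊤ : Subgroup G) (4 * ka + 4) := by
      refine hstr.trans ?_
      calc ⁅B, B ⊓ Subgroup.lowerCentralSeries (⊤ : Subgroup G) (2*ka+2)⁆
          ≤ ⁅Subgroup.lowerCentralSeries (⊤ : Subgroup G) (2*ka+1), Subgroup.lowerCentralSeries (⊤ : Subgroup G) (2*ka+2)⁆ :=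
            Subgroup.commutator_mono hBL inf_le_right
        _ ≤ Subgroup.lowerCentralSeries (⊤ : Subgroup G) ((2*ka+1) + (2*ka+2) + 1) := lcs_comm _ _
        _ = Subgroup.lowerCentralSeries (⊤ : Subgroup G) (4 * ka + 4) := by congr 1; ring
    -- zero slack at a+2 : |C : C₁| divides p
    have hC₁C : C₁ ≤ C := ncc_succ_le C 0
    have hDC : D = ⁅C, C⁆ := derivedSeries_succ G (a + 2)
    have hDnccC : D ≤ ncc C (4 * ka + 5) := by
      rw [hDC]
      exact (Subgroup.commutator_mono le_rfl hCL).trans (comm_lcs_le_ncc C (4 * ka + 4))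
    have hnccC₁ : ncc C₁ (4 * ka + 4) = ncc C (4 * ka + 5) := by
      rw [hC₁_def, ncc_add]; congr 1; omega
    have hnbC : ncc C₁ (4 * ka + 4) ≠ ⊥ := by
      rw [hnccC₁]
      exact fun hb => hDne (le_bot_iff.mp (hb ▸ hDnccC))
    have hchainC : p ^ (4 * ka + 4) * Nat.card D ≤ Nat.card C₁ := by
      have hh1 := ncc_chain_card hp hG C₁ (4 * ka + 4) hnbC
      have hh2 : Nat.card D ≤ Nat.card (ncc C₁ (4 * ka + 4)) :=
        Subgroup.card_le_of_le (hDnccC.trans_eq hnccC₁.symm)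
      calc p ^ (4*ka+4) * Nat.card D ≤ p ^ (4*ka+4) * Nat.card (ncc C₁ (4*ka+4)) :=
            Nat.mul_le_mul_left _ hh2
        _ ≤ Nat.card C₁ := hh1
    set s := C₁.relIndex C with hs_def
    have hsC : Nat.card C = s * Nat.card C₁ := card_of_le hC₁C
    have hsle : s ≤ p := by
      have hh1 : s * (p ^ (4*ka+4) * Nat.card D) ≤ s * Nat.card C₁ :=
        Nat.mul_le_mul_left _ hchainC
      rw [← hsC, hcC] at hh1
      have hh2 : (s * p ^ (4*ka+4)) * Nat.card D ≤ (p * p ^ (4*ka+4)) * Nat.card D := by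
        calc (s * p ^ (4*ka+4)) * Nat.card D = s * (p ^ (4*ka+4) * Nat.card D) := by ring
          _ ≤ p ^ (4 * ka + 5) * Nat.card D := hh1
          _ = (p * p ^ (4*ka+4)) * Nat.card D := by rw [← pow_succ']
      have hh3 := Nat.le_of_mul_le_mul_right hh2 (card_pos' D)
      exact Nat.le_of_mul_le_mul_right hh3 (pow_pos hp.pos _)
    have hsdvd : s ∣ p := by
      haveI : Fact p.Prime := ⟨hp⟩
      obtain ⟨n, hn⟩ := IsPGroup.iff_card.mp hG
      have hh1 : s ∣ p ^ n := by
        have hh2 : s ∣ Nat.card C := ⟨Nat.card C₁, hsC⟩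
        rw [← hn]
        exact hh2.trans (Subgroup.card_subgroup_dvd_card C)
      obtain ⟨j, hj, hje⟩ := (Nat.dvd_prime_pow hp).mp hh1
      have hj1 : j ≤ 1 := by
        by_contra hj2
        push_neg at hj2
        have : p ^ 2 ≤ p ^ j := Nat.pow_le_pow_right hp.pos hj2
        have : p < p ^ 2 := by
          calc p = p ^ 1 := (pow_one p).symm
            _ < p ^ 2 := Nat.pow_lt_pow_right hp.one_lt (by omega)
        omega
      rw [hje]
      rcases Nat.le_one_iff_eq_zero_or_eq_one.mp hj1 with rfl | rfl
      · rw [pow_zero]; exact one_dvd p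
      · rw [pow_one]
    have hdvd : Nat.card C ∣ p * Nat.card C₁ := by
      rw [hsC]
      exact Nat.mul_dvd_mul_right hsdvd _
    obtain ⟨z, hz, hzle⟩ := exists_one_gen hp hC₁C hdvd
    have hDCC₁ : D ≤ ⁅C, C₁⁆ := by
      rw [hDC]
      exact key_comm hz hz hC₁C hzle le_rfl
        (by rw [commutatorElement_self]; exact one_mem _)
    have hC₁L : C₁ ≤ Subgroup.lowerCentralSeries (⊤ : Subgroup G) (4 * ka + 5) := by
      show ⁅C, ⊤⁆ ≤ _
      calc ⁅C, ⊤⁆ ≤ ⁅Subgroup.lowerCentralSeries (⊤ : Subgroup G) (4*ka+4), Subgroup.lowerCentralSeries (⊤ : Subgroup G) 0⁆ :=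
            Subgroup.commutator_mono hCL (by rw [Subgroup.lowerCentralSeries_zero])
        _ ≤ Subgroup.lowerCentralSeries (⊤ : Subgroup G) ((4*ka+4) + 0 + 1) := lcs_comm _ 0
        _ = Subgroup.lowerCentralSeries (⊤ : Subgroup G) (4 * ka + 5) := by congr 1
    have hDncc : D ≤ ncc A (7 * ka + 10) := by
      refine hDCC₁.trans ?_
      calc ⁅C, C₁⁆ ≤ ⁅C, Subgroup.lowerCentralSeries (⊤ : Subgroup G) (4 * ka + 5)⁆ :=
            Subgroup.commutator_mono le_rfl hC₁L
        _ ≤ ncc C (4 * ka + 6) := comm_lcs_le_ncc C (4 * ka + 5)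
        _ ≤ ncc (ncc A (3 * ka + 4)) (4 * ka + 6) := ncc_mono hCncc _
        _ = ncc A (7 * ka + 10) := by rw [ncc_add]; congr 1; ring
    -- fat-top count : card A = p^2 card A₁ and chain inside A₁
    have hnccA₁D : ncc A₁ (7 * ka + 9) = ncc A (7 * ka + 10) := by
      rw [hA₁_def, ncc_add]; congr 1; omega
    have hnbA : ncc A₁ (7 * ka + 9) ≠ ⊥ := by
      rw [hnccA₁D]
      exact fun hb => hDne (le_bot_iff.mp (hb ▸ hDncc))
    have hchainA : p ^ (7 * ka + 9) * Nat.card D ≤ Nat.card A₁ := by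
      have hh1 := ncc_chain_card hp hG A₁ (7 * ka + 9) hnbA
      have hh2 : Nat.card D ≤ Nat.card (ncc A₁ (7 * ka + 9)) :=
        Subgroup.card_le_of_le (hDncc.trans_eq hnccA₁D.symm)
      calc p ^ (7*ka+9) * Nat.card D ≤ p ^ (7*ka+9) * Nat.card (ncc A₁ (7*ka+9)) :=
            Nat.mul_le_mul_left _ hh2
        _ ≤ Nat.card A₁ := hh1
    have hbig : p ^ (7 * ka + 11) * Nat.card D ≤ Nat.card A := by
      calc p ^ (7*ka+11) * Nat.card D = p ^ 2 * (p ^ (7*ka+9) * Nat.card D) := by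
            rw [show 7*ka+11 = 2 + (7*ka+9) by ring, pow_add, mul_assoc]
        _ ≤ p ^ 2 * Nat.card A₁ := Nat.mul_le_mul_left _ hchainA
        _ = Nat.card A := hr.symm
    rw [hcAD] at hbig
    have hpow : p ^ (7*ka+11) ≤ p ^ (7 * ka + 10) :=
      Nat.le_of_mul_le_mul_right hbig (card_pos' _)
    have := (Nat.pow_le_pow_iff_right hp.one_lt).mp hpow
    omega

end Main

end MannProof

/-- Mann: a finite `p`-group has at most two small derived quotients. -/
theorem at_most_two_small_derived_quotients {p : ℕ} (hp : p.Prime) {G : Type*}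
    [Group G] [Finite G] (hG : IsPGroup p G) :
    ∀ d₁ d₂ d₃ : ℕ, IsSmallDerivedQuotient p G d₁ → IsSmallDerivedQuotient p G d₂ →
      IsSmallDerivedQuotient p G d₃ → d₁ = d₂ ∨ d₁ = d₃ ∨ d₂ = d₃ := by
  intro d₁ d₂ d₃ h₁ h₂ h₃
  by_contra hcon
  push_neg at hcon
  obtain ⟨h12, h13, h23⟩ := hcon
  have core : ∀ x y z : ℕ, x < y → y < z → IsSmallDerivedQuotient p G x →
      IsSmallDerivedQuotient p G y → IsSmallDerivedQuotient p G z → False := by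
    intro x y z hxy hyz hx hy hz
    have hy2 : y ≤ x + 2 := MannProof.small_le hp hG hx hy hxy
    have hz2 : z ≤ x + 2 := MannProof.small_le hp hG hx hz (hxy.trans hyz)
    have hy1 : y = x + 1 := by omega
    have hz1 : z = x + 2 := by omega
    subst hy1; subst hz1
    exact MannProof.no_triple hp hG hx hy hz
  rcases Nat.lt_trichotomy d₁ d₂ with ha | ha | ha
  · rcases Nat.lt_trichotomy d₂ d₃ with hb | hb | hb
    · exact core d₁ d₂ d₃ ha hb h₁ h₂ h₃
    · exact h23 hb
    · rcases Nat.lt_trichotomy d₁ d₃ with hc | hc | hc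
      · exact core d₁ d₃ d₂ hc hb h₁ h₃ h₂
      · exact h13 hc
      · exact core d₃ d₁ d₂ hc ha h₃ h₁ h₂
  · exact h12 ha
  · rcases Nat.lt_trichotomy d₁ d₃ with hb | hb | hb
    · exact core d₂ d₁ d₃ ha hb h₂ h₁ h₃
    · exact h13 hb
    · rcases Nat.lt_trichotomy d₂ d₃ with hc | hc | hc
      · exact core d₂ d₃ d₁ hc hb h₂ h₃ h₁
      · exact h23 hc
      · exact core d₃ d₂ d₁ hc ha h₃ h₂ h₁
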